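/- Let Q be the quadratic form (x, y) ↦ x² + y² on ℝ². The submonoid of CliffordAlgebra Q generated by the set {ι(v) : v ∈ ℝ², Q(v) = 1} (products of unit vectors) is isomorphic, as a monoid, to the orthogonal group O(2) of real orthogonal 2×2 matrices. (This is the paper's claim that Pin⁺₂ ≅ O(2).) -/

import Mathlib

open CliffordAlgebra

/-- The quadratic form `(x, y) ↦ x² + y²` on `ℝ²`. -/
noncomputable def euclidForm2 : QuadraticForm ℝ (ℝ × ℝ) :=
  (QuadraticMap.sq (R := ℝ) (A := ℝ)).prod (QuadraticMap.sq (R := ℝ) (A := ℝ))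

namespace PinO2

open Matrix CliffordAlgebraQuaternion

lemma euclidForm2_eq : euclidForm2 = CliffordAlgebraQuaternion.Q (1 : ℝ) 1 := by
  ext v
  simp [euclidForm2, CliffordAlgebraQuaternion.Q, QuadraticMap.sq]

/-- A quaternion basis for `M₂(ℝ)` with `i² = j² = 1`. -/
noncomputable def qBasis : QuaternionAlgebra.Basis (Matrix (Fin 2) (Fin 2) ℝ) (1 : ℝ) 0 1 where
  i := !![1, 0; 0, -1]
  j := !![0, 1; 1, 0]
  k := !![0, 1; -1, 0]
  i_mul_i := by
    rw [Matrix.mul_fin_two, Matrix.one_fin_two, Matrix.smul_of]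
    norm_num
  j_mul_j := by
    rw [Matrix.mul_fin_two, Matrix.one_fin_two, Matrix.smul_of]
    norm_num
  i_mul_j := by
    rw [Matrix.mul_fin_two]
    norm_num
  j_mul_i := by
    rw [Matrix.mul_fin_two]
    norm_num

/-- The algebra map from the Clifford algebra to `M₂(ℝ)`. -/
noncomputable def f :
    CliffordAlgebra (CliffordAlgebraQuaternion.Q (1 : ℝ) 1) →ₐ[ℝ] Matrix (Fin 2) (Fin 2) ℝ :=
  qBasis.liftHom.comp CliffordAlgebraQuaternion.toQuaternion

lemma f_ι (v : ℝ × ℝ) :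
    f (ι (CliffordAlgebraQuaternion.Q (1 : ℝ) 1) v) = !![v.1, v.2; v.2, -v.1] := by
  rw [show f = qBasis.liftHom.comp CliffordAlgebraQuaternion.toQuaternion from rfl,
    AlgHom.comp_apply, toQuaternion_ι]
  show qBasis.lift _ = _
  rw [QuaternionAlgebra.Basis.lift]
  simp only [qBasis, map_zero, zero_smul, zero_add, add_zero]
  ext i j
  fin_cases i <;> fin_cases j <;> simp

lemma f_injective : Function.Injective f := by
  have h0 : ∀ x, f x = 0 → x = 0 := by
    intro x hx
    have hq : qBasis.lift (toQuaternion x) = 0 := hx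
    set q := toQuaternion x with hqdef
    rw [QuaternionAlgebra.Basis.lift] at hq
    have h00 := congrFun (congrFun hq 0) 0
    have h01 := congrFun (congrFun hq 0) 1
    have h10 := congrFun (congrFun hq 1) 0
    have h11 := congrFun (congrFun hq 1) 1
    simp only [qBasis, Matrix.add_apply, Matrix.smul_apply, Matrix.zero_apply,
      Matrix.cons_val_zero, Matrix.cons_val_one, Matrix.head_cons, Matrix.head_fin_const,
      Algebra.algebraMap_eq_smul_one, Matrix.one_apply, Matrix.cons_val', Matrix.empty_val',
      Matrix.cons_val_fin_one, smul_eq_mul, Matrix.of_apply] at h00 h01 h10 h11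
    norm_num at h00 h01 h10 h11
    have hq0 : q = 0 := by
      ext <;> simp only [QuaternionAlgebra.re_zero, QuaternionAlgebra.imI_zero,
        QuaternionAlgebra.imJ_zero, QuaternionAlgebra.imK_zero] <;> linarith
    have := congrArg ofQuaternion hq0
    rwa [ofQuaternion_toQuaternion, map_zero] at this
  intro a b hab
  have : f (a - b) = 0 := by rw [map_sub, hab, sub_self]
  exact sub_eq_zero.mp (h0 _ this)

end PinO2

set_option maxHeartbeats 1600000 in
/-- For the quadratic form `Q(x, y) = x² + y²` on `ℝ²`, the submonoid of the
Clifford algebra of `Q` generated by `{ι v : Q v = 1}` (products of unit vectors) is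
isomorphic, as a monoid, to the orthogonal group `O(2)` of real orthogonal `2 × 2` matrices;
this is the claim `Pin⁺₂ ≅ O(2)`. -/
theorem pinPlus_two_iso_O2 :
    Nonempty
      ((Submonoid.closure
          {x : CliffordAlgebra euclidForm2 |
            ∃ v : ℝ × ℝ, euclidForm2 v = 1 ∧ ι euclidForm2 v = x}) ≃*
        Matrix.orthogonalGroup (Fin 2) ℝ) := by
  rw [PinO2.euclidForm2_eq]
  set Q' := CliffordAlgebraQuaternion.Q (1 : ℝ) 1 with hQ'
  set S : Set (CliffordAlgebra Q') :=
    {x | ∃ v : ℝ × ℝ, Q' v = 1 ∧ ι Q' v = x} with hS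
  -- the images of closure elements are orthogonal
  have hgen : ∀ x ∈ S, PinO2.f x ∈ Matrix.orthogonalGroup (Fin 2) ℝ := by
    rintro x ⟨v, hv, rfl⟩
    rw [Matrix.mem_orthogonalGroup_iff, PinO2.f_ι]
    rw [hQ', CliffordAlgebraQuaternion.Q_apply] at hv
    have hv1 : v.1 * v.1 + v.2 * v.2 = 1 := by linarith
    have hstar : star !![v.1, v.2; v.2, -v.1] = !![v.1, v.2; v.2, -v.1] := by
      rw [Matrix.star_eq_conjTranspose]
      ext i j
      fin_cases i <;> fin_cases j <;> simp
    rw [← Matrix.conjTranspose_eq_transpose_of_trivial, ← Matrix.star_eq_conjTranspose, hstar]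
    ext i j
    fin_cases i <;> fin_cases j <;>
      simp [Matrix.mul_apply, Fin.sum_univ_two, Matrix.one_apply] <;> linarith
  have hmem : ∀ x ∈ Submonoid.closure S, PinO2.f x ∈ Matrix.orthogonalGroup (Fin 2) ℝ := by
    intro x hx
    induction hx using Submonoid.closure_induction with
    | mem y hy => exact hgen y hy
    | one => rw [map_one]; exact one_mem _
    | mul a b _ _ ha hb => rw [map_mul]; exact mul_mem ha hb
  let φ : Submonoid.closure S →* Matrix.orthogonalGroup (Fin 2) ℝ :=
    MonoidHom.codRestrict
      ((PinO2.f.toRingHom.toMonoidHom).comp (Submonoid.closure S).subtype) _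
      (fun x => hmem x x.2)
  have hφ : ∀ x : Submonoid.closure S, (φ x : Matrix (Fin 2) (Fin 2) ℝ) = PinO2.f x :=
    fun x => rfl
  refine ⟨MulEquiv.ofBijective φ ⟨?_, ?_⟩⟩
  · intro a b hab
    have : PinO2.f (a : CliffordAlgebra Q') = PinO2.f (b : CliffordAlgebra Q') := by
      rw [← hφ a, ← hφ b, hab]
    exact Subtype.ext (PinO2.f_injective this)
  · rintro ⟨M, hM⟩
    have hMo : star M * M = 1 := (Matrix.mem_unitaryGroup_iff'.mp hM)
    rw [Matrix.star_eq_conjTranspose] at hMo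
    set a := M 0 0 with ha
    set b := M 0 1 with hb
    set c := M 1 0 with hc
    set d := M 1 1 with hd
    have e00 := congrFun (congrFun hMo 0) 0
    have e01 := congrFun (congrFun hMo 0) 1
    have e11 := congrFun (congrFun hMo 1) 1
    simp only [Matrix.mul_apply, Fin.sum_univ_two, Matrix.conjTranspose_apply,
      Matrix.one_apply, star_trivial] at e00 e01 e11
    norm_num at e00 e01 e11
    -- e00 : a * a + c * c = 1, e01 : a * b + c * d = 0, e11 : b * b + d * d = 1
    have hdet : (a * d - b * c) * (a * d - b * c) = 1 := by nlinarith [e00, e01, e11]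
    have hM2 : M = !![a, b; c, d] := by
      rw [Matrix.eta_fin_two M]
    rcases mul_self_eq_one_iff.mp hdet with h | h
    · -- rotation case : b = -c, d = a
      have hbc : b = -c := by nlinarith [sq_nonneg (b + c), sq_nonneg (d - a)]
      have hda : d = a := by nlinarith [sq_nonneg (b + c), sq_nonneg (d - a)]
      have hq1 : Q' ((1 : ℝ), (0 : ℝ)) = 1 := by
        simp [hQ', CliffordAlgebraQuaternion.Q_apply]
      have hq2 : Q' ((a : ℝ), (-c : ℝ)) = 1 := by
        simp only [hQ', CliffordAlgebraQuaternion.Q_apply]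
        nlinarith [e00]
      refine ⟨⟨ι Q' (1, 0) * ι Q' (a, -c),
        mul_mem (Submonoid.subset_closure ⟨(1, 0), hq1, rfl⟩)
          (Submonoid.subset_closure ⟨(a, -c), hq2, rfl⟩)⟩, ?_⟩
      apply Subtype.ext
      show PinO2.f (ι Q' (1, 0) * ι Q' (a, -c)) = M
      rw [map_mul, PinO2.f_ι, PinO2.f_ι, hM2, hbc, hda]
      simp only [Matrix.mul_fin_two]
      norm_num
    · -- reflection case : b = c, d = -a
      have hbc : b = c := by nlinarith [sq_nonneg (b - c), sq_nonneg (d + a)]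
      have hda : d = -a := by nlinarith [sq_nonneg (b - c), sq_nonneg (d + a)]
      have hq2 : Q' ((a : ℝ), (c : ℝ)) = 1 := by
        simp only [hQ', CliffordAlgebraQuaternion.Q_apply]
        linarith [e00]
      refine ⟨⟨ι Q' (a, c), Submonoid.subset_closure ⟨(a, c), hq2, rfl⟩⟩, ?_⟩
      apply Subtype.ext
      show PinO2.f (ι Q' (a, c)) = M
      rw [PinO2.f_ι, hM2, hbc, hda]
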